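/- If G = C_n (n ≥ 3 vertices, m = n edges) and G_C is obtained by attaching t cycles of length r ≥ 3 at every vertex, then HM(G_C) = 16n + 32mt^2 + 16mt + 8nt^3 + 16nt^2 + 16rnt + 16nt, i.e. HM(G_C) = 16n + 32nt^2 + 16nt + 8nt^3 + 16nt^2 + 16rnt + 16nt. -/

import Mathlib

open Finset

variable {V : Type*}

/-- Edge set of `G` as a `Finset`, using classical decidability. -/
noncomputable def edgeFS [Fintype V] (G : SimpleGraph V) : Finset (Sym2 V) :=
  letI := Classical.decEq V
  letI : DecidableRel G.Adj := Classical.decRel _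
  G.edgeFinset

/-- Degree of a vertex, using classical decidability. -/
noncomputable def deg [Fintype V] (G : SimpleGraph V) (v : V) : ℕ :=
  letI : DecidableRel G.Adj := Classical.decRel _
  G.degree v

/-- Sum over the edges of `G` of a symmetric integer-valued function of the endpoints. -/
noncomputable def edgeSum [Fintype V] (G : SimpleGraph V) (f : V → V → ℤ)
    (hf : ∀ u v, f u v = f v u) : ℤ :=
  ∑ e ∈ edgeFS G, Sym2.lift ⟨f, hf⟩ e

/-- The hyper Zagreb index `HM(G) = Σ_{uv ∈ E(G)} (d(u)+d(v))²`. -/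
noncomputable def hm [Fintype V] (G : SimpleGraph V) : ℕ :=
  ∑ e ∈ edgeFS G, Sym2.lift ⟨fun u v => (deg G u + deg G v) ^ 2,
    fun u v => by simp [add_comm]⟩ e

/-- The first Zagreb index `M₁(G) = Σ_v d(v)²`. -/
noncomputable def m1 [Fintype V] (G : SimpleGraph V) : ℕ :=
  ∑ v, (deg G v) ^ 2


variable {V : Type*}

/-- Type-I generalized thorn graph `G_P`: attach `t v` pendant paths of order `r`
(i.e. with `r - 1` new vertices each) at each vertex `v` of `G`,
identifying `v` with an endpoint of each path. -/
def thornPath (G : SimpleGraph V) (t : V → ℕ) (r : ℕ) :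
    SimpleGraph (V ⊕ ((Σ v : V, Fin (t v)) × Fin (r - 1))) where
  Adj x y :=
    match x, y with
    | Sum.inl u, Sum.inl v => G.Adj u v
    | Sum.inl u, Sum.inr (p, j) => p.1 = u ∧ j.val = 0
    | Sum.inr (p, j), Sum.inl u => p.1 = u ∧ j.val = 0
    | Sum.inr (p, j), Sum.inr (q, j') => p = q ∧ (j.val + 1 = j'.val ∨ j'.val + 1 = j.val)
  symm := by
    constructor
    rintro (u | ⟨p, j⟩) (v | ⟨q, j'⟩) h
    · exact G.adj_symm h
    · exact h
    · exact h
    · exact ⟨h.1.symm, h.2.symm⟩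
  loopless := by
    constructor
    rintro (u | ⟨p, j⟩) h
    · exact G.irrefl h
    · omega

/-- Type-II generalized thorn graph `G_C`: attach `t v` cycles of length `r`
at each vertex `v` of `G`, identifying `v` with one vertex of each cycle. -/
def thornCycle (G : SimpleGraph V) (t : V → ℕ) (r : ℕ) :
    SimpleGraph (V ⊕ ((Σ v : V, Fin (t v)) × Fin (r - 1))) where
  Adj x y :=
    match x, y with
    | Sum.inl u, Sum.inl v => G.Adj u v
    | Sum.inl u, Sum.inr (p, j) => p.1 = u ∧ (j.val = 0 ∨ j.val = r - 2)
    | Sum.inr (p, j), Sum.inl u => p.1 = u ∧ (j.val = 0 ∨ j.val = r - 2)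
    | Sum.inr (p, j), Sum.inr (q, j') => p = q ∧ (j.val + 1 = j'.val ∨ j'.val + 1 = j.val)
  symm := by
    constructor
    rintro (u | ⟨p, j⟩) (v | ⟨q, j'⟩) h
    · exact G.adj_symm h
    · exact h
    · exact h
    · exact ⟨h.1.symm, h.2.symm⟩
  loopless := by
    constructor
    rintro (u | ⟨p, j⟩) h
    · exact G.irrefl h
    · omega

/-- Type-III generalized thorn graph `G_K`: attach `t v` copies of the complete graph `K_r`
at each vertex `v` of `G`, identifying `v` with one vertex of each copy. -/
def thornComplete (G : SimpleGraph V) (t : V → ℕ) (r : ℕ) :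
    SimpleGraph (V ⊕ ((Σ v : V, Fin (t v)) × Fin (r - 1))) where
  Adj x y :=
    match x, y with
    | Sum.inl u, Sum.inl v => G.Adj u v
    | Sum.inl u, Sum.inr (p, j) => p.1 = u
    | Sum.inr (p, j), Sum.inl u => p.1 = u
    | Sum.inr (p, j), Sum.inr (q, j') => p = q ∧ j ≠ j'
  symm := by
    constructor
    rintro (u | ⟨p, j⟩) (v | ⟨q, j'⟩) h
    · exact G.adj_symm h
    · exact h
    · exact h
    · exact ⟨h.1.symm, h.2.symm⟩
  loopless := by
    constructor
    rintro (u | ⟨p, j⟩) h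
    · exact G.irrefl h
    · exact h.2 rfl

/-- Type-IV generalized thorn graph `G_A`: attach `t v` copies of the complete bipartite
graph `K_{r,s}` at each vertex `v`, identifying `v` with one vertex of the part of size `r`. -/
def thornBipartite (G : SimpleGraph V) (t : V → ℕ) (r s : ℕ) :
    SimpleGraph (V ⊕ ((Σ v : V, Fin (t v)) × (Fin (r - 1) ⊕ Fin s))) where
  Adj x y :=
    match x, y with
    | Sum.inl u, Sum.inl v => G.Adj u v
    | Sum.inl u, Sum.inr (p, x) => p.1 = u ∧ x.isRight
    | Sum.inr (p, x), Sum.inl u => p.1 = u ∧ x.isRight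
    | Sum.inr (p, x), Sum.inr (q, y) => p = q ∧ x.isLeft ≠ y.isLeft
  symm := by
    constructor
    rintro (u | ⟨p, x⟩) (v | ⟨q, y⟩) h
    · exact G.adj_symm h
    · exact h
    · exact h
    · exact ⟨h.1.symm, h.2.symm⟩
  loopless := by
    constructor
    rintro (u | ⟨p, x⟩) h
    · exact G.irrefl h
    · exact h.2 rfl

/-- Type-V generalized thorn graph `G_{C'}`: join `t v` disjoint copies of the cycle `C_r`
to each vertex `v` of `G`, each by a new bridge edge. -/
def joinedCycle (G : SimpleGraph V) (t : V → ℕ) (r : ℕ) :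
    SimpleGraph (V ⊕ ((Σ v : V, Fin (t v)) × Fin r)) where
  Adj x y :=
    match x, y with
    | Sum.inl u, Sum.inl v => G.Adj u v
    | Sum.inl u, Sum.inr (p, j) => p.1 = u ∧ j.val = 0
    | Sum.inr (p, j), Sum.inl u => p.1 = u ∧ j.val = 0
    | Sum.inr (p, j), Sum.inr (q, j') =>
        p = q ∧ j ≠ j' ∧ ((j.val + 1) % r = j'.val ∨ (j'.val + 1) % r = j.val)
  symm := by
    constructor
    rintro (u | ⟨p, j⟩) (v | ⟨q, j'⟩) h
    · exact G.adj_symm h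
    · exact h
    · exact h
    · exact ⟨h.1.symm, h.2.1.symm, h.2.2.symm⟩
  loopless := by
    constructor
    rintro (u | ⟨p, j⟩) h
    · exact G.irrefl h
    · exact h.2.1 rfl

/-- Type-VI generalized thorn graph `G_{K'}`: join `t v` disjoint copies of the complete
graph `K_r` to each vertex `v` of `G`, each by a new bridge edge. -/
def joinedComplete (G : SimpleGraph V) (t : V → ℕ) (r : ℕ) :
    SimpleGraph (V ⊕ ((Σ v : V, Fin (t v)) × Fin r)) where
  Adj x y :=
    match x, y with
    | Sum.inl u, Sum.inl v => G.Adj u v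
    | Sum.inl u, Sum.inr (p, j) => p.1 = u ∧ j.val = 0
    | Sum.inr (p, j), Sum.inl u => p.1 = u ∧ j.val = 0
    | Sum.inr (p, j), Sum.inr (q, j') => p = q ∧ j ≠ j'
  symm := by
    constructor
    rintro (u | ⟨p, j⟩) (v | ⟨q, j'⟩) h
    · exact G.adj_symm h
    · exact h
    · exact h
    · exact ⟨h.1.symm, h.2.symm⟩
  loopless := by
    constructor
    rintro (u | ⟨p, j⟩) h
    · exact G.irrefl h
    · exact h.2 rfl


section Aux

open SimpleGraph
open scoped Classical

lemma edgeFS_eq' [Fintype V] [DecidableEq V] (G : SimpleGraph V) [DecidableRel G.Adj] :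
    edgeFS G = G.edgeFinset := by
  ext e
  simp only [edgeFS, SimpleGraph.mem_edgeFinset]

lemma deg_eq' [Fintype V] (G : SimpleGraph V) (v : V) [Fintype (G.neighborSet v)] :
    deg G v = G.degree v := by
  unfold deg SimpleGraph.degree SimpleGraph.neighborFinset
  congr 1
  ext w
  simp [Set.mem_toFinset]

lemma two_mul_edgeSum [Fintype V] [DecidableEq V] (G : SimpleGraph V) [DecidableRel G.Adj]
    (f : V → V → ℕ) (hf : ∀ u v, f u v = f v u) :
    2 * ∑ e ∈ edgeFS G, Sym2.lift ⟨f, hf⟩ e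
      = ∑ x, ∑ y, if G.Adj x y then f x y else 0 := by
  classical
  rw [edgeFS_eq']
  have h1 : ∑ x, ∑ y, (if G.Adj x y then f x y else 0)
      = ∑ d : G.Dart, f d.fst d.snd := by
    rw [← Finset.sum_product']
    rw [Finset.sum_ite, Finset.sum_const_zero, add_zero]
    refine (Finset.sum_bij' (fun d _ ↦ (d.fst, d.snd)) (fun p hp ↦ ⟨p, (mem_filter.1 hp).2⟩)
      ?_ ?_ ?_ ?_ ?_).symm <;> simp
  rw [h1]
  rw [← Finset.sum_fiberwise_of_maps_to (g := SimpleGraph.Dart.edge) (t := G.edgeFinset)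
      (fun d _ ↦ by rw [SimpleGraph.mem_edgeFinset]; exact d.edge_mem)]
  rw [Finset.mul_sum]
  refine Finset.sum_congr rfl fun e he ↦ ?_
  rw [SimpleGraph.mem_edgeFinset] at he
  induction e with
  | _ v w =>
    let d : G.Dart := ⟨(v, w), he⟩
    have hfib : ({d' : G.Dart | d'.edge = d.edge} : Finset _) = {d, d.symm} :=
      SimpleGraph.Dart.edge_fiber d
    have : (Finset.univ.filter fun d' : G.Dart => d'.edge = s(v, w)) = {d, d.symm} := by
      convert hfib using 2
      exact Iff.rfl
    rw [this, Finset.sum_pair d.symm_ne.symm]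
    simp [d, SimpleGraph.Dart.symm, hf v w, two_mul]

lemma deg_eq_sum [Fintype V] (G : SimpleGraph V) [DecidableRel G.Adj] (v : V) :
    deg G v = ∑ w, if G.Adj v w then 1 else 0 := by
  rw [deg_eq', Finset.sum_boole, Nat.cast_id, SimpleGraph.degree,
    SimpleGraph.neighborFinset_eq_filter]

lemma deg_cycle (n : ℕ) (hn : 3 ≤ n) (u : Fin n) :
    deg (SimpleGraph.cycleGraph n) u = 2 := by
  obtain ⟨k, rfl⟩ : ∃ k, n = k + 3 := ⟨n - 3, by omega⟩
  rw [deg_eq']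
  exact SimpleGraph.cycleGraph_degree_three_le

lemma cnt2 (m j : ℕ) (hm2 : 2 ≤ m) (hj : j < m) :
    #(filter (fun j' => j + 1 = j' ∨ j' + 1 = j) (range m))
      = if j = 0 ∨ j = m - 1 then 1 else 2 := by
  split_ifs with h
  · rcases h with h | h
    · have : filter (fun j' => j + 1 = j' ∨ j' + 1 = j) (range m) = {1} := by
        ext x; simp only [mem_filter, mem_range, mem_singleton]; omega
      simp [this]
    · have : filter (fun j' => j + 1 = j' ∨ j' + 1 = j) (range m) = {j - 1} := by
        ext x; simp only [mem_filter, mem_range, mem_singleton]; omega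
      simp [this]
  · push_neg at h
    have : filter (fun j' => j + 1 = j' ∨ j' + 1 = j) (range m) = {j - 1, j + 1} := by
      ext x; simp only [mem_filter, mem_range, mem_insert, mem_singleton]; omega
    rw [this, card_pair (by omega)]

lemma cntP (m : ℕ) (hm2 : 2 ≤ m) :
    #(filter (fun j => j = 0 ∨ j = m - 1) (range m)) = 2 := by
  have : filter (fun j => j = 0 ∨ j = m - 1) (range m) = {0, m - 1} := by
    ext x; simp only [mem_filter, mem_range, mem_insert, mem_singleton]; omega
  rw [this, card_pair (by omega)]

lemma cntJ (r : ℕ) (hr : 3 ≤ r) :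
    ∑ j : Fin (r - 1), (if (j : ℕ) = 0 ∨ (j : ℕ) = r - 2 then 1 else 0) = 2 := by
  rw [Fin.sum_univ_eq_sum_range (fun k => if k = 0 ∨ k = r - 2 then 1 else 0),
    Finset.sum_boole, Nat.cast_id]
  have : filter (fun k => k = 0 ∨ k = r - 2) (range (r - 1)) = {0, r - 2} := by
    ext x; simp only [mem_filter, mem_range, mem_insert, mem_singleton]; omega
  rw [this, card_pair (by omega)]

lemma cntQ (r : ℕ) (hr : 3 ≤ r) :
    ∑ j : Fin (r - 1), (if (j : ℕ) = 0 ∨ (j : ℕ) = r - 1 - 1 then (1:ℕ) else 2)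
      = 2 * r - 4 := by
  rw [Fin.sum_univ_eq_sum_range (fun k => if k = 0 ∨ k = r - 1 - 1 then (1:ℕ) else 2)]
  rw [Finset.sum_ite, Finset.sum_const, Finset.sum_const, Finset.filter_not,
    Finset.card_sdiff_of_subset (filter_subset _ _), cntP (r - 1) (by omega), Finset.card_range]
  simp; omega

lemma sum_boole_mul' {A : Type*} [Fintype A] (P : A → Prop) [DecidablePred P] (K : ℕ) :
    ∑ x, (if P x then K else 0) = (∑ x, if P x then 1 else 0) * K := by
  rw [Finset.sum_mul]
  exact Finset.sum_congr rfl (fun x _ => by split_ifs <;> simp)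

variable (n t r : ℕ)

lemma cnt_inl_inl (hn : 3 ≤ n) (u : Fin n) :
    ∑ v : Fin n,
      (if (thornCycle (SimpleGraph.cycleGraph n) (fun _ => t) r).Adj (Sum.inl u) (Sum.inl v)
        then 1 else 0) = 2 := by
  classical
  have heq : ∀ v : Fin n,
      (thornCycle (SimpleGraph.cycleGraph n) (fun _ => t) r).Adj (Sum.inl u) (Sum.inl v)
        ↔ (SimpleGraph.cycleGraph n).Adj u v := fun v => Iff.rfl
  simp only [heq]
  rw [← deg_eq_sum, deg_cycle n hn u]

lemma cnt_inl_inr (hr : 3 ≤ r) (u : Fin n) :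
    ∑ b : (Σ _ : Fin n, Fin t) × Fin (r - 1),
      (if (thornCycle (SimpleGraph.cycleGraph n) (fun _ => t) r).Adj (Sum.inl u) (Sum.inr b)
        then 1 else 0) = 2 * t := by
  classical
  rw [Fintype.sum_prod_type]
  have heq : ∀ (p : Σ _ : Fin n, Fin t) (j : Fin (r - 1)),
      (thornCycle (SimpleGraph.cycleGraph n) (fun _ => t) r).Adj (Sum.inl u) (Sum.inr (p, j))
        ↔ (p.1 = u ∧ ((j : ℕ) = 0 ∨ (j : ℕ) = r - 2)) := fun p j => Iff.rfl
  simp only [heq, ite_and]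
  simp only [Finset.sum_ite_irrel, Finset.sum_const_zero]
  rw [← Finset.univ_sigma_univ, Finset.sum_sigma]
  simp only [Finset.sum_ite_eq', Finset.mem_univ, if_true]
  rw [cntJ r hr]
  rw [Finset.sum_comm]
  simp [mul_comm]

lemma cnt_inr_inl (p : Σ _ : Fin n, Fin t) (j : Fin (r - 1)) :
    ∑ u : Fin n,
      (if (thornCycle (SimpleGraph.cycleGraph n) (fun _ => t) r).Adj (Sum.inr (p, j)) (Sum.inl u)
        then 1 else 0) = if (j : ℕ) = 0 ∨ (j : ℕ) = r - 2 then 1 else 0 := by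
  classical
  have heq : ∀ u : Fin n,
      (thornCycle (SimpleGraph.cycleGraph n) (fun _ => t) r).Adj (Sum.inr (p, j)) (Sum.inl u)
        ↔ (p.1 = u ∧ ((j : ℕ) = 0 ∨ (j : ℕ) = r - 2)) := fun u => Iff.rfl
  simp only [heq, ite_and]
  simp [Finset.sum_ite_eq]

lemma cnt_inr_inr (hr : 3 ≤ r) (p : Σ _ : Fin n, Fin t) (j : Fin (r - 1)) :
    ∑ b' : (Σ _ : Fin n, Fin t) × Fin (r - 1),
      (if (thornCycle (SimpleGraph.cycleGraph n) (fun _ => t) r).Adj (Sum.inr (p, j))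
          (Sum.inr b') then 1 else 0)
        = if (j : ℕ) = 0 ∨ (j : ℕ) = r - 1 - 1 then 1 else 2 := by
  classical
  rw [Fintype.sum_prod_type]
  have heq : ∀ (q : Σ _ : Fin n, Fin t) (j' : Fin (r - 1)),
      (thornCycle (SimpleGraph.cycleGraph n) (fun _ => t) r).Adj (Sum.inr (p, j))
          (Sum.inr (q, j'))
        ↔ (p = q ∧ ((j : ℕ) + 1 = (j' : ℕ) ∨ (j' : ℕ) + 1 = (j : ℕ))) := fun q j' => Iff.rfl
  simp only [heq, ite_and]
  simp only [Finset.sum_ite_irrel, Finset.sum_const_zero]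
  rw [Finset.sum_ite_eq univ p
    (fun _ => ∑ x : Fin (r - 1), if (j:ℕ) + 1 = (x:ℕ) ∨ (x:ℕ) + 1 = (j:ℕ) then 1 else 0)]
  rw [if_pos (Finset.mem_univ p)]
  rw [Fin.sum_univ_eq_sum_range (fun k => if (j:ℕ) + 1 = k ∨ k + 1 = (j:ℕ) then 1 else 0),
    Finset.sum_boole, Nat.cast_id, cnt2 (r - 1) j (by omega) j.isLt]

lemma deg_inl (hn : 3 ≤ n) (hr : 3 ≤ r) (u : Fin n) :
    deg (thornCycle (SimpleGraph.cycleGraph n) (fun _ => t) r) (Sum.inl u) = 2 + 2 * t := by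
  classical
  rw [deg_eq_sum, Fintype.sum_sum_type, cnt_inl_inl n t r hn u, cnt_inl_inr n t r hr u]

lemma deg_inr (hr : 3 ≤ r) (b : (Σ _ : Fin n, Fin t) × Fin (r - 1)) :
    deg (thornCycle (SimpleGraph.cycleGraph n) (fun _ => t) r) (Sum.inr b) = 2 := by
  classical
  obtain ⟨p, j⟩ := b
  rw [deg_eq_sum, Fintype.sum_sum_type, cnt_inr_inl n t r p j, cnt_inr_inr n t r hr p j]
  have := j.isLt
  split_ifs <;> omega

end Aux

theorem hyperZagreb_thornCycle_cycle (n t r : ℕ) (hn : 3 ≤ n) (hr : 3 ≤ r)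
    (m : ℕ) (hmn : m = n) :
    (hm (thornCycle (SimpleGraph.cycleGraph n) (fun _ => t) r) : ℤ) =
      16 * n + 32 * m * t ^ 2 + 16 * m * t + 8 * n * t ^ 3 + 16 * n * t ^ 2
        + 16 * r * n * t + 16 * n * t := by
  classical
  rw [hmn]
  have key : 2 * hm (thornCycle (SimpleGraph.cycleGraph n) (fun _ => t) r)
      = 2 * (16 * n + 48 * n * t ^ 2 + 32 * n * t + 8 * n * t ^ 3 + 16 * r * n * t) := by
    unfold hm
    rw [two_mul_edgeSum]
    rw [Fintype.sum_sum_type]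
    simp only [Fintype.sum_sum_type]
    simp only [deg_inl n t r hn hr, deg_inr n t r hr]
    have hA : ∑ u : Fin n, ∑ v : Fin n,
        (if (thornCycle (SimpleGraph.cycleGraph n) (fun _ => t) r).Adj (Sum.inl u) (Sum.inl v)
          then ((2 + 2 * t) + (2 + 2 * t)) ^ 2 else 0)
        = n * (2 * ((2 + 2 * t) + (2 + 2 * t)) ^ 2) := by
      have h : ∀ u : Fin n, ∑ v : Fin n,
          (if (thornCycle (SimpleGraph.cycleGraph n) (fun _ => t) r).Adj (Sum.inl u) (Sum.inl v)
            then ((2 + 2 * t) + (2 + 2 * t)) ^ 2 else 0)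
          = 2 * ((2 + 2 * t) + (2 + 2 * t)) ^ 2 := by
        intro u
        rw [sum_boole_mul', cnt_inl_inl n t r hn u]
      simp [h]
    have hB : ∑ u : Fin n, ∑ b : (Σ _ : Fin n, Fin t) × Fin (r - 1),
        (if (thornCycle (SimpleGraph.cycleGraph n) (fun _ => t) r).Adj (Sum.inl u) (Sum.inr b)
          then ((2 + 2 * t) + 2) ^ 2 else 0)
        = n * (2 * t * ((2 + 2 * t) + 2) ^ 2) := by
      have h : ∀ u : Fin n, ∑ b : (Σ _ : Fin n, Fin t) × Fin (r - 1),
          (if (thornCycle (SimpleGraph.cycleGraph n) (fun _ => t) r).Adj (Sum.inl u) (Sum.inr b)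
            then ((2 + 2 * t) + 2) ^ 2 else 0)
          = 2 * t * ((2 + 2 * t) + 2) ^ 2 := by
        intro u
        rw [sum_boole_mul', cnt_inl_inr n t r hr u]
      simp [h]
    have hC : ∑ b : (Σ _ : Fin n, Fin t) × Fin (r - 1), ∑ u : Fin n,
        (if (thornCycle (SimpleGraph.cycleGraph n) (fun _ => t) r).Adj (Sum.inr b) (Sum.inl u)
          then (2 + (2 + 2 * t)) ^ 2 else 0)
        = n * t * 2 * (2 + (2 + 2 * t)) ^ 2 := by
      have h : ∀ b : (Σ _ : Fin n, Fin t) × Fin (r - 1), ∑ u : Fin n,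
          (if (thornCycle (SimpleGraph.cycleGraph n) (fun _ => t) r).Adj (Sum.inr b) (Sum.inl u)
            then (2 + (2 + 2 * t)) ^ 2 else 0)
          = (if (b.2 : ℕ) = 0 ∨ (b.2 : ℕ) = r - 2 then 1 else 0) * (2 + (2 + 2 * t)) ^ 2 := by
        rintro ⟨p, j⟩
        rw [sum_boole_mul', cnt_inr_inl n t r p j]
      rw [Finset.sum_congr rfl (fun b _ => h b), ← Finset.sum_mul]
      congr 1
      rw [Fintype.sum_prod_type]
      have h2 : ∀ p : Σ _ : Fin n, Fin t,
          ∑ j : Fin (r - 1), (if (j : ℕ) = 0 ∨ (j : ℕ) = r - 2 then (1:ℕ) else 0) = 2 :=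
        fun p => cntJ r hr
      rw [Finset.sum_congr rfl (fun p _ => h2 p), Finset.sum_const]
      simp [Fintype.card_sigma, mul_assoc]
    have hD : ∑ b : (Σ _ : Fin n, Fin t) × Fin (r - 1),
        ∑ b' : (Σ _ : Fin n, Fin t) × Fin (r - 1),
        (if (thornCycle (SimpleGraph.cycleGraph n) (fun _ => t) r).Adj (Sum.inr b) (Sum.inr b')
          then (2 + 2) ^ 2 else 0)
        = n * t * (2 * r - 4) * (2 + 2) ^ 2 := by
      have h : ∀ b : (Σ _ : Fin n, Fin t) × Fin (r - 1),
          ∑ b' : (Σ _ : Fin n, Fin t) × Fin (r - 1),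
          (if (thornCycle (SimpleGraph.cycleGraph n) (fun _ => t) r).Adj (Sum.inr b) (Sum.inr b')
            then (2 + 2) ^ 2 else 0)
          = (if (b.2 : ℕ) = 0 ∨ (b.2 : ℕ) = r - 1 - 1 then 1 else 2) * (2 + 2) ^ 2 := by
        rintro ⟨p, j⟩
        rw [sum_boole_mul', cnt_inr_inr n t r hr p j]
      rw [Finset.sum_congr rfl (fun b _ => h b), ← Finset.sum_mul]
      congr 1
      rw [Fintype.sum_prod_type]
      have h2 : ∀ p : Σ _ : Fin n, Fin t,
          ∑ j : Fin (r - 1), (if (j : ℕ) = 0 ∨ (j : ℕ) = r - 1 - 1 then (1:ℕ) else 2)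
            = 2 * r - 4 := fun p => cntQ r hr
      rw [Finset.sum_congr rfl (fun p _ => h2 p), Finset.sum_const]
      simp [Fintype.card_sigma, mul_assoc]
    rw [Finset.sum_add_distrib, Finset.sum_add_distrib, hA, hB, hC, hD]
    obtain ⟨s, rfl⟩ : ∃ s, r = s + 3 := ⟨r - 3, by omega⟩
    have h4 : 2 * (s + 3) - 4 = 2 * s + 2 := by omega
    rw [h4]
    ring
  have key2 : hm (thornCycle (SimpleGraph.cycleGraph n) (fun _ => t) r)
      = 16 * n + 48 * n * t ^ 2 + 32 * n * t + 8 * n * t ^ 3 + 16 * r * n * t := by omega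
  rw [key2]
  push_cast
  ring
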